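/- Let N ≥ 2, 1 ≤ k ≤ N and T ≥ 1 be natural numbers and let α be a real number with 0 < α < 1 − 1/N. Let r : {0,…,k} → ℝ satisfy submodularity (r(j−1) − r(j) ≥ r(j) − r(j+1) for all 1 ≤ j ≤ k−1) and r(k) ≤ r(0), and write r* := r(k). Let r̂ : {0,…,T} → ℝ satisfy r̂(0) = r(0), r̂(1) ≤ r(1), and the α-curvature condition (r̂(t) − r̂(t+1) ≥ α·(r̂(t−1) − r̂(t)) for all 1 ≤ t ≤ T−1). Then, setting γ := (1 − α^T)/((1 − α)·N), it holds that r̂(T) ≤ γ·r* + (1 − γ)·r(0). -/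

import Mathlib

/-- Scalar core of the Approximation Guarantee (Theorem 1):
given a submodular optimal-path sequence `r` on `{0,…,k}` with `r k ≤ r 0`,
and an algorithm sequence `rhat` on `{0,…,T}` with `rhat 0 = r 0`, `rhat 1 ≤ r 1`
and the `α`-curvature condition, with `γ = (1 - α^T)/((1 - α)·N)` one has
`rhat T ≤ γ · r k + (1 - γ) · r 0`. -/
theorem approximation_guarantee_scalar
    (N k T : ℕ) (hN : 2 ≤ N) (hk1 : 1 ≤ k) (hkN : k ≤ N) (hT : 1 ≤ T)
    (α : ℝ) (hα0 : 0 < α) (hα1 : α < 1 - 1 / (N : ℝ))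
    (r rhat : ℕ → ℝ)
    (hsub : ∀ j : ℕ, 1 ≤ j → j ≤ k - 1 → r (j - 1) - r j ≥ r j - r (j + 1))
    (hrk : r k ≤ r 0)
    (hhat0 : rhat 0 = r 0) (hhat1 : rhat 1 ≤ r 1)
    (hcurv : ∀ t : ℕ, 1 ≤ t → t ≤ T - 1 →
      rhat t - rhat (t + 1) ≥ α * (rhat (t - 1) - rhat t)) :
    rhat T ≤ ((1 - α ^ T) / ((1 - α) * (N : ℝ))) * r k
      + (1 - (1 - α ^ T) / ((1 - α) * (N : ℝ))) * r 0 := by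
  have hNpos : (0:ℝ) < N := by
    have : (2:ℝ) ≤ N := by exact_mod_cast hN
    linarith
  have hα1' : α < 1 := by
    have : (0:ℝ) < 1 / N := by positivity
    linarith
  have hαne : α ≠ 1 := ne_of_lt hα1'
  have h1α : (0:ℝ) < 1 - α := by linarith
  -- Step 1: differences of r are bounded by the first one
  have hd : ∀ j, j ≤ k - 1 → r j - r (j + 1) ≤ r 0 - r 1 := by
    intro j
    induction j with
    | zero => intro _; simp
    | succ n ih =>
      intro h
      have h1 := hsub (n + 1) (by omega) h
      simp only [Nat.add_sub_cancel] at h1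
      have h2 := ih (by omega)
      linarith
  -- Step 2: r 0 - r k ≤ k * (r 0 - r 1)
  have htel : ∑ j ∈ Finset.range k, (r j - r (j + 1)) = r 0 - r k :=
    Finset.sum_range_sub' r k
  have hsum : r 0 - r k ≤ (k : ℝ) * (r 0 - r 1) := by
    rw [← htel]
    have hle : ∑ j ∈ Finset.range k, (r j - r (j + 1))
        ≤ ∑ _j ∈ Finset.range k, (r 0 - r 1) := by
      apply Finset.sum_le_sum
      intro j hj
      exact hd j (by have := Finset.mem_range.mp hj; omega)
    rw [Finset.sum_const, Finset.card_range, nsmul_eq_mul] at hle; exact hle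
  have hkpos : (0:ℝ) < k := by exact_mod_cast hk1
  have hkNr : (k:ℝ) ≤ N := by exact_mod_cast hkN
  have hd0 : 0 ≤ r 0 - r 1 := by nlinarith
  have hrN : r 0 - r k ≤ (N : ℝ) * (r 0 - r 1) := by nlinarith
  -- Step 3: curvature induction
  have he : ∀ t, t ≤ T - 1 → α ^ t * (rhat 0 - rhat 1) ≤ rhat t - rhat (t + 1) := by
    intro t
    induction t with
    | zero => intro _; simp
    | succ n ih =>
      intro h
      have h1 := hcurv (n + 1) (by omega) h
      simp only [Nat.add_sub_cancel] at h1
      have h2 := ih (by omega)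
      have h3 : α * (α ^ n * (rhat 0 - rhat 1)) ≤ α * (rhat n - rhat (n + 1)) :=
        mul_le_mul_of_nonneg_left h2 (le_of_lt hα0)
      calc α ^ (n + 1) * (rhat 0 - rhat 1)
          = α * (α ^ n * (rhat 0 - rhat 1)) := by ring
        _ ≤ α * (rhat n - rhat (n + 1)) := h3
        _ ≤ rhat (n + 1) - rhat (n + 2) := h1
  -- Step 4: sum over range T
  have htel2 : ∑ t ∈ Finset.range T, (rhat t - rhat (t + 1)) = rhat 0 - rhat T :=
    Finset.sum_range_sub' rhat T
  have hgsum : (∑ t ∈ Finset.range T, α ^ t) * (rhat 0 - rhat 1) ≤ rhat 0 - rhat T := by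
    rw [← htel2, Finset.sum_mul]
    apply Finset.sum_le_sum
    intro t ht
    exact he t (by simp at ht; omega)
  have hgeom : ∑ t ∈ Finset.range T, α ^ t = (1 - α ^ T) / (1 - α) := by
    rw [geom_sum_eq hαne, div_eq_div_iff (by linarith) (by linarith : (1:ℝ) - α ≠ 0)]
    ring
  set S : ℝ := (1 - α ^ T) / (1 - α) with hS
  have hSnn : 0 ≤ S := by
    have : α ^ T < 1 := pow_lt_one₀ (le_of_lt hα0) hα1' (by omega)
    apply div_nonneg <;> linarith
  -- e0 ≥ (r0 - rk)/N
  have he0 : (r 0 - r k) / N ≤ rhat 0 - rhat 1 := by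
    rw [div_le_iff₀ hNpos]
    have : r 0 - rhat 1 ≥ r 0 - r 1 := by linarith
    nlinarith
  have hmain : S * ((r 0 - r k) / N) ≤ rhat 0 - rhat T := by
    calc S * ((r 0 - r k) / N) ≤ S * (rhat 0 - rhat 1) :=
          mul_le_mul_of_nonneg_left he0 hSnn
      _ ≤ rhat 0 - rhat T := by rw [← hgeom] at *; exact hgsum
  have hγ : S * ((r 0 - r k) / N) =
      ((1 - α ^ T) / ((1 - α) * (N : ℝ))) * (r 0 - r k) := by
    rw [hS]; field_simp
  rw [hγ] at hmain
  rw [hhat0] at hmain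
  nlinarith [hmain]
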